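/- Let λ be a k-strict partition with λ_i + λ_j ≤ 2k + j − i for all i < j. Then Θ_λ(x;y) = ∑_{μ⊆λ} S_μ(x) s_{λ'/μ'}(y), where S_μ(x) = det(q_{μ_i + j − i}(x)) and s_{λ'/μ'}(y) = det(e_{λ_i − μ_j + j − i}(y)). -/

import Mathlib

/-- The index type of pairs `i < j` in `{0,…,ℓ-1}`. -/
def PairIdx (ℓ : ℕ) := {p : Fin ℓ × Fin ℓ // p.1 < p.2}

instance (ℓ : ℕ) : Fintype (PairIdx ℓ) := by unfold PairIdx; infer_instance
instance (ℓ : ℕ) : DecidableEq (PairIdx ℓ) := by unfold PairIdx; infer_instance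

/-- `e_i(y)` for `i : ℕ`. -/
def esymmVal {R : Type*} [CommRing R] {k : ℕ} (y : Fin k → R) (i : ℕ) : R :=
  ∑ s ∈ Finset.powersetCard i (Finset.univ : Finset (Fin k)), ∏ j ∈ s, y j

/-- `e_r(y)` for `r : ℤ` (zero for negative `r`). -/
def eInt {R : Type*} [CommRing R] {k : ℕ} (y : Fin k → R) (r : ℤ) : R :=
  if 0 ≤ r then esymmVal y r.toNat else 0

/-- `q_r(x)` for `r : ℤ` (zero for negative `r`). -/
noncomputable def qInt {R : Type*} [CommRing R] (Q : PowerSeries R) (r : ℤ) : R :=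
  if 0 ≤ r then PowerSeries.coeff r.toNat Q else 0

/-- `ϑ_r(x;y) = ∑_i q_{r-i}(x) e_i(y)` for `r : ℤ` (zero for negative `r`). -/
noncomputable def thInt {R : Type*} [CommRing R] {k : ℕ}
    (Q : PowerSeries R) (y : Fin k → R) (r : ℤ) : R :=
  if 0 ≤ r then
    ∑ i ∈ Finset.range (r.toNat + 1), PowerSeries.coeff (r.toNat - i) Q * esymmVal y i
  else 0

namespace Stmt16
open Finset
variable {R : Type*} [CommRing R]

lemma perm_eq_one_of_strictMono {m : ℕ} (σ : Equiv.Perm (Fin m)) (h : StrictMono (⇑σ)) :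
    σ = 1 := by
  have hs : Function.Surjective (⇑σ) := σ.surjective
  have heq : StrictMono.orderIsoOfSurjective _ h hs = OrderIso.refl (Fin m) :=
    Subsingleton.elim _ _
  ext x
  have := congrArg (fun (e : Fin m ≃o Fin m) => e x) heq
  simp only [OrderIso.refl_apply] at this
  rw [show (StrictMono.orderIsoOfSurjective (⇑σ) h hs) x = σ x from rfl] at this
  exact congrArg Fin.val this

lemma add_le_of_strictAnti {m : ℕ} (d : Fin m → ℤ) (hd : ∀ i j : Fin m, i < j → d j < d i)
    {i j : Fin m} (hij : i ≤ j) : d j + (j : ℤ) ≤ d i + (i : ℤ) := by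
  obtain ⟨a, ha⟩ : ∃ a : ℕ, (j : ℕ) = (i : ℕ) + a := ⟨j - i, by omega⟩
  induction a generalizing j with
  | zero =>
    have : i = j := Fin.ext (by omega)
    subst this; rfl
  | succ a ih =>
    have hj' : (i : ℕ) + a < m := by have := j.2; omega
    set j' : Fin m := ⟨(i : ℕ) + a, hj'⟩ with hj'def
    have hlt : j' < j := by rw [Fin.lt_def]; simp [hj'def]; omega
    have hdd := hd j' j hlt
    have h1 : d j + (j : ℤ) ≤ d j' + (j' : ℤ) := by
      have hv : ((j : ℕ) : ℤ) = ((j' : ℕ) : ℤ) + 1 := by simp [hj'def]; push_cast; omega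
      omega
    have h2 : d j' + (j' : ℤ) ≤ d i + (i : ℤ) := ih (by rw [Fin.le_def]; simp [hj'def]) rfl
    omega

lemma prod_pairIdx {M : Type*} [CommMonoid M] {m : ℕ} (F : Fin m → Fin m → M) :
    ∏ p : PairIdx m, F p.1.1 p.1.2 = ∏ i : Fin m, ∏ j ∈ Finset.Ioi i, F i j := by
  rw [Finset.prod_sigma']
  refine Finset.prod_bij (fun (p : PairIdx m) _ => (⟨p.1.1, p.1.2⟩ : Σ _ : Fin m, Fin m))
    ?_ ?_ ?_ ?_
  · intro p _
    simp [Finset.mem_sigma, Finset.mem_Ioi, p.2]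
  · intro p _ q _ h
    have h1 : p.1.1 = q.1.1 := congrArg Sigma.fst h
    have h2 : p.1.2 = q.1.2 := by
      have := congrArg (fun s : Σ _ : Fin m, Fin m => (s.2 : ℕ)) h
      simpa using Fin.ext this
    exact Subtype.ext (Prod.ext h1 h2)
  · intro b hb
    simp only [Finset.mem_sigma, Finset.mem_univ, Finset.mem_Ioi, true_and] at hb
    exact ⟨⟨(b.1, b.2), hb⟩, Finset.mem_univ _, rfl⟩
  · intro p _; rfl

lemma card_snd_fiber {m : ℕ} (t : Fin m) :
    ((univ : Finset (PairIdx m)).filter (fun p => p.1.2 = t)).card = (t : ℕ) := by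
  rw [← Fin.card_Iio t]
  apply Finset.card_bij (fun (p : PairIdx m) _ => p.1.1)
  · intro p hp
    simp only [Finset.mem_filter] at hp
    simp only [Finset.mem_Iio]
    exact hp.2 ▸ p.2
  · intro p hp q hq h
    simp only [Finset.mem_filter] at hp hq
    exact Subtype.ext (Prod.ext h (hp.2.trans hq.2.symm))
  · intro b hb
    simp only [Finset.mem_Iio] at hb
    exact ⟨⟨(b, t), hb⟩, Finset.mem_filter.mpr ⟨Finset.mem_univ _, rfl⟩, rfl⟩

variable {R : Type*} [CommRing R]

noncomputable def zz (R : Type*) [CommRing R] {G : Type*} [AddCommMonoid G] (v : G) :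
    AddMonoidAlgebra R G := AddMonoidAlgebra.single v 1

lemma zz_mul {G : Type*} [AddCommMonoid G] (a b : G) :
    (zz R a) * zz R b = zz R (a + b) := by
  simp [zz, AddMonoidAlgebra.single_mul_single]

lemma zz_zero {G : Type*} [AddCommMonoid G] : (zz R (0 : G)) = 1 := rfl

lemma prod_zz {G : Type*} [AddCommMonoid G] {ι : Type*} (s : Finset ι) (v : ι → G) :
    ∏ p ∈ s, (zz R (v p)) = zz R (∑ p ∈ s, v p) := by
  have : ∀ w : G, zz R w = AddMonoidAlgebra.of R G (Multiplicative.ofAdd w) := fun w => rfl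
  simp_rw [this]
  rw [← map_prod, ← ofAdd_sum]

lemma zz_pow {G : Type*} [AddCommMonoid G] (w : G) (c : ℕ) :
    (zz R w) ^ c = zz R (c • w) := by
  rw [zz, AddMonoidAlgebra.single_pow, one_pow]; rfl

noncomputable def Ff {R : Type*} [CommRing R] {m : ℕ} (f : ℤ → R) (lam : Fin m → ℕ) :
    AddMonoidAlgebra R (Fin m → ℤ) →ₗ[R] R :=
  Finsupp.linearCombination R (fun v : Fin m → ℤ => ∏ i, f ((lam i : ℤ) + v i)) ∘ₗ
    (AddMonoidAlgebra.coeffLinearEquiv R).toLinearMap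

lemma Ff_single {m : ℕ} (f : ℤ → R) (lam : Fin m → ℕ) (v : Fin m → ℤ) (c : R) :
    Ff f lam (AddMonoidAlgebra.single v c) = c * ∏ i, f ((lam i : ℤ) + v i) := by
  rw [Ff, LinearMap.comp_apply, LinearEquiv.coe_coe, AddMonoidAlgebra.coeffLinearEquiv_apply,
    AddMonoidAlgebra.coeff_single, Finsupp.linearCombination_single, smul_eq_mul]

theorem partA {m : ℕ} (f : ℤ → R) (lam : Fin m → ℕ) :
    ∑ T ∈ (Finset.univ : Finset (PairIdx m)).powerset,
      (-1 : R) ^ T.card *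
        ∏ i : Fin m,
          f ((lam i : ℤ) + ((T.filter fun p => p.1.1 = i).card : ℤ)
            - ((T.filter fun p => p.1.2 = i).card : ℤ))
      = ∑ σ : Equiv.Perm (Fin m), ((Equiv.Perm.sign σ : ℤ) : R) *
          ∏ i : Fin m, f ((lam i : ℤ) + ((σ i : ℕ) : ℤ) - ((i : ℕ) : ℤ)) := by
  classical
  set ev : Fin m → (Fin m → ℤ) := fun i => Pi.single i 1 with hev
  -- the ring identity
  have key : ∏ p : PairIdx m, (1 - zz R (ev p.1.1 - ev p.1.2))
      = ∑ σ : Equiv.Perm (Fin m), ((Equiv.Perm.sign σ : ℤ) : AddMonoidAlgebra R (Fin m → ℤ)) *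
          zz R (fun t => ((σ⁻¹ t : ℕ) : ℤ) - ((t : ℕ) : ℤ)) := by
    have factor : ∀ p : PairIdx m, 1 - zz R (ev p.1.1 - ev p.1.2) =
        zz R (-(ev p.1.2)) * (zz R (ev p.1.2) - zz R (ev p.1.1)) := by
      intro p
      rw [mul_sub, zz_mul, zz_mul, neg_add_cancel, zz_zero]
      congr 2
      abel
    calc ∏ p : PairIdx m, (1 - zz R (ev p.1.1 - ev p.1.2))
        = ∏ p : PairIdx m, (zz R (-(ev p.1.2)) * (zz R (ev p.1.2) - zz R (ev p.1.1))) :=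
          Finset.prod_congr rfl fun p _ => factor p
      _ = (∏ p : PairIdx m, zz R (-(ev p.1.2))) *
            ∏ p : PairIdx m, (zz R (ev p.1.2) - zz R (ev p.1.1)) := Finset.prod_mul_distrib
      _ = zz R (∑ p : PairIdx m, -(ev p.1.2)) *
            Matrix.det (Matrix.vandermonde fun i => zz R (ev i)) := by
          rw [prod_zz, prod_pairIdx (fun a b => zz R (ev b) - zz R (ev a)),
            Matrix.det_vandermonde]
      _ = ∑ σ : Equiv.Perm (Fin m), ((Equiv.Perm.sign σ : ℤ) : AddMonoidAlgebra R (Fin m → ℤ)) *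
            zz R (fun t => ((σ⁻¹ t : ℕ) : ℤ) - ((t : ℕ) : ℤ)) := by
          rw [Matrix.det_apply', Finset.mul_sum]
          refine Finset.sum_congr rfl fun σ _ => ?_
          rw [mul_left_comm]
          congr 1
          simp_rw [Matrix.vandermonde_apply, zz_pow]
          rw [prod_zz, zz_mul]
          congr 1
          funext t
          have h1 : (∑ p : PairIdx m, -(ev p.1.2)) t = -((t : ℕ) : ℤ) := by
            simp only [Finset.sum_apply, Pi.neg_apply, hev, Pi.single_apply]
            rw [Finset.sum_neg_distrib]
            congr 1
            rw [Finset.sum_boole]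
            rw [show ((univ : Finset (PairIdx m)).filter fun p => t = p.1.2) =
              ((univ : Finset (PairIdx m)).filter fun p => p.1.2 = t) from by
                apply Finset.filter_congr; intro p _; simp [eq_comm]]
            rw [card_snd_fiber]
          have h2 : (∑ i : Fin m, (i : ℕ) • ev (σ i)) t = ((σ⁻¹ t : ℕ) : ℤ) := by
            simp only [Finset.sum_apply, Pi.smul_apply, hev, Pi.single_apply]
            have : ∀ i : Fin m, (i : ℕ) • (if t = σ i then (1:ℤ) else 0) =
                if i = σ⁻¹ t then ((i : ℕ) : ℤ) else 0 := by
              intro i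
              by_cases h : t = σ i
              · rw [if_pos h, if_pos (by rw [h]; simp)]; simp
              · rw [if_neg h, if_neg (by intro hc; apply h; rw [hc]; simp)]
                simp
            simp_rw [this]
            rw [Finset.sum_ite_eq' Finset.univ (σ⁻¹ t) (fun i => ((i : ℕ) : ℤ))]
            simp
          rw [Pi.add_apply, h1, h2]
          ring
  -- expansion over subsets
  have expand : ∏ p : PairIdx m, (1 - zz R (ev p.1.1 - ev p.1.2))
      = ∑ T ∈ (Finset.univ : Finset (PairIdx m)).powerset,
          ((-1 : R) ^ T.card) • zz R (fun t => ((T.filter fun p => p.1.1 = t).card : ℤ)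
            - ((T.filter fun p => p.1.2 = t).card : ℤ)) := by
    have h1 : ∀ p : PairIdx m, (1 : AddMonoidAlgebra R (Fin m → ℤ)) -
        zz R (ev p.1.1 - ev p.1.2) = (-(zz R (ev p.1.1 - ev p.1.2))) + 1 := fun p => by ring
    simp_rw [h1]
    rw [Finset.prod_add]
    refine Finset.sum_congr rfl fun T hT => ?_
    rw [Finset.prod_const_one, mul_one]
    have h2 : ∀ p : PairIdx m, -(zz R (ev p.1.1 - ev p.1.2)) =
        (-1 : AddMonoidAlgebra R (Fin m → ℤ)) * zz R (ev p.1.1 - ev p.1.2) := fun p => by ring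
    simp_rw [h2]
    rw [Finset.prod_mul_distrib, Finset.prod_const, prod_zz]
    have harg : (∑ p ∈ T, (ev p.1.1 - ev p.1.2)) =
        (fun t => ((T.filter fun p => p.1.1 = t).card : ℤ)
          - ((T.filter fun p => p.1.2 = t).card : ℤ)) := by
      funext t
      rw [Finset.sum_apply]
      simp only [Pi.sub_apply, hev, Pi.single_apply]
      have e1 : (T.filter fun x => t = x.1.1) = (T.filter fun p => p.1.1 = t) := by
        apply Finset.filter_congr; intro p _; simp [eq_comm]
      have e2 : (T.filter fun x => t = x.1.2) = (T.filter fun p => p.1.2 = t) := by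
        apply Finset.filter_congr; intro p _; simp [eq_comm]
      rw [Finset.sum_sub_distrib, Finset.sum_boole, Finset.sum_boole, e1, e2]
    rw [harg, Algebra.smul_def, map_pow, map_neg, map_one]
  -- apply the functional Ff
  have happ := congrArg (Ff f lam) (expand.symm.trans key)
  rw [map_sum, map_sum] at happ
  calc ∑ T ∈ (Finset.univ : Finset (PairIdx m)).powerset,
      (-1 : R) ^ T.card *
        ∏ i : Fin m,
          f ((lam i : ℤ) + ((T.filter fun p => p.1.1 = i).card : ℤ)
            - ((T.filter fun p => p.1.2 = i).card : ℤ))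
      = ∑ T ∈ (Finset.univ : Finset (PairIdx m)).powerset,
          Ff f lam (((-1 : R) ^ T.card) • zz R (fun t => ((T.filter fun p => p.1.1 = t).card : ℤ)
            - ((T.filter fun p => p.1.2 = t).card : ℤ))) := by
        refine Finset.sum_congr rfl fun T _ => ?_
        rw [map_smul, smul_eq_mul]
        congr 1
        rw [zz, Ff_single, one_mul]
        refine Finset.prod_congr rfl fun i _ => ?_
        congr 1
        ring
    _ = ∑ σ : Equiv.Perm (Fin m),
          Ff f lam (((Equiv.Perm.sign σ : ℤ) : AddMonoidAlgebra R (Fin m → ℤ)) *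
            zz R (fun t => ((σ⁻¹ t : ℕ) : ℤ) - ((t : ℕ) : ℤ))) := happ
    _ = ∑ σ : Equiv.Perm (Fin m), ((Equiv.Perm.sign σ : ℤ) : R) *
          ∏ i : Fin m, f ((lam i : ℤ) + ((σ⁻¹ i : ℕ) : ℤ) - ((i : ℕ) : ℤ)) := by
        refine Finset.sum_congr rfl fun σ _ => ?_
        have : ((Equiv.Perm.sign σ : ℤ) : AddMonoidAlgebra R (Fin m → ℤ)) *
            zz R (fun t => ((σ⁻¹ t : ℕ) : ℤ) - ((t : ℕ) : ℤ)) =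
            ((Equiv.Perm.sign σ : ℤ) : R) •
              zz R (fun t => ((σ⁻¹ t : ℕ) : ℤ) - ((t : ℕ) : ℤ)) := by
          rw [Algebra.smul_def, map_intCast]
        rw [this, map_smul, smul_eq_mul, zz, Ff_single, one_mul]
        congr 1
        exact Finset.prod_congr rfl fun i _ => by rw [add_sub_assoc]
    _ = ∑ σ : Equiv.Perm (Fin m), ((Equiv.Perm.sign σ : ℤ) : R) *
          ∏ i : Fin m, f ((lam i : ℤ) + ((σ i : ℕ) : ℤ) - ((i : ℕ) : ℤ)) := by
        refine Fintype.sum_equiv (Equiv.inv (Equiv.Perm (Fin m))) _ _ (fun σ => ?_)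
        simp only [Equiv.inv_apply]
        rw [Equiv.Perm.sign_inv]

lemma qInt_neg {Q : PowerSeries R} {r : ℤ} (h : r < 0) : qInt Q r = 0 := by rw [qInt, if_neg (by omega)]

lemma eInt_neg {k : ℕ} {y : Fin k → R} {r : ℤ} (h : r < 0) : eInt y r = 0 := if_neg (by omega)

lemma thInt_eq_sum {k : ℕ} (Q : PowerSeries R) (y : Fin k → R) (a : ℤ) (b : ℕ)
    (S : Finset ℤ) (hS : ∀ c : ℤ, -(b : ℤ) ≤ c → c ≤ a → c ∈ S) :
    thInt Q y (a + b) = ∑ c ∈ S, eInt y (a - c) * qInt Q (c + b) := by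
  have hsub : Finset.Icc (-(b:ℤ)) a ⊆ S := fun c hc => by
    rw [Finset.mem_Icc] at hc; exact hS c hc.1 hc.2
  have hzero : ∀ c ∈ S, c ∉ Finset.Icc (-(b:ℤ)) a → eInt y (a - c) * qInt Q (c + b) = 0 := by
    intro c _ hc
    rw [Finset.mem_Icc] at hc
    push_neg at hc
    by_cases h1 : -(b:ℤ) ≤ c
    · rw [eInt_neg (by omega), zero_mul]
    · rw [qInt_neg (by omega), mul_zero]
  have hred : (∑ c ∈ Finset.Icc (-(b:ℤ)) a, eInt y (a - c) * qInt Q (c + b)) =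
      ∑ c ∈ S, eInt y (a - c) * qInt Q (c + b) :=
    Finset.sum_subset hsub hzero
  rw [← hred]
  by_cases hab : 0 ≤ a + (b : ℤ)
  · rw [thInt, if_pos hab]
    refine Finset.sum_nbij' (fun s : ℕ => a - (s : ℤ)) (fun c : ℤ => (a - c).toNat)
      ?_ ?_ ?_ ?_ ?_
    · intro s hs
      beta_reduce
      rw [Finset.mem_range] at hs
      rw [Finset.mem_Icc]
      omega
    · intro c hc
      beta_reduce
      rw [Finset.mem_Icc] at hc
      rw [Finset.mem_range]
      omega
    · intro s hs
      beta_reduce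
      rw [Finset.mem_range] at hs
      omega
    · intro c hc
      beta_reduce
      rw [Finset.mem_Icc] at hc
      omega
    · intro s hs
      beta_reduce
      rw [Finset.mem_range] at hs
      rw [eInt, if_pos (by omega), qInt, if_pos (by omega)]
      rw [mul_comm, show ((a : ℤ) - (s : ℤ) + (b : ℤ)).toNat = (a + (b:ℤ)).toNat - s from by omega,
        show ((a : ℤ) - ((a : ℤ) - (s : ℤ))).toNat = s from by omega]
  · rw [thInt, if_neg hab]
    refine (Finset.sum_eq_zero fun c hc => ?_).symm
    rw [Finset.mem_Icc] at hc
    rw [eInt_neg (by omega), zero_mul]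

lemma anti_comp_unique {m : ℕ} {d d' : Fin m → ℤ}
    (hd : ∀ i j : Fin m, i < j → d j < d i) (hd' : ∀ i j : Fin m, i < j → d' j < d' i)
    (τ τ' : Equiv.Perm (Fin m)) (h : d ∘ ⇑τ = d' ∘ ⇑τ') : d = d' ∧ τ = τ' := by
  set ρ : Equiv.Perm (Fin m) := τ'⁻¹.trans τ with hρdef
  have hcomp : d ∘ ⇑ρ = d' := by
    funext x
    have := congrFun h (τ'⁻¹ x)
    simpa [hρdef] using this
  have hsm : StrictMono ⇑ρ := by
    intro u v huv
    have h2 : d' v < d' u := hd' u v huv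
    rw [← hcomp] at h2
    simp only [Function.comp_apply] at h2
    rcases lt_trichotomy (ρ u) (ρ v) with h3 | h3 | h3
    · exact h3
    · exact absurd h2 (by rw [h3]; exact lt_irrefl _)
    · exact absurd (hd _ _ h3) (by omega)
  have hρ1 : ρ = 1 := perm_eq_one_of_strictMono ρ hsm
  have hττ' : τ = τ' := by
    ext x
    have := congrArg (fun e : Equiv.Perm (Fin m) => e (τ' x)) hρ1
    simp only [hρdef, Equiv.trans_apply, Equiv.Perm.one_apply, Equiv.symm_apply_apply] at this
    simpa [Equiv.Perm.inv_def] using congrArg Fin.val this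
  refine ⟨?_, hττ'⟩
  rw [← hcomp, hρ1]
  funext x; simp

lemma sorted_anti {m : ℕ} (γ : Fin m → ℤ) (hγ : Function.Injective γ) :
    ∀ i j : Fin m, i < j → (γ ∘ ⇑(Fin.revPerm.trans (Tuple.sort γ))) j
      < (γ ∘ ⇑(Fin.revPerm.trans (Tuple.sort γ))) i := by
  have hmono : Monotone (γ ∘ ⇑(Tuple.sort γ)) := Tuple.monotone_sort γ
  have hinj : Function.Injective (γ ∘ ⇑(Tuple.sort γ)) := hγ.comp (Equiv.injective _)
  have hsm : StrictMono (γ ∘ ⇑(Tuple.sort γ)) := hmono.strictMono_of_injective hinj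
  intro i j hij
  simp only [Function.comp_apply, Equiv.trans_apply, Fin.revPerm_apply]
  exact hsm (Fin.rev_lt_rev.mpr hij)

lemma sum_inj_group {M : Type*} [AddCommMonoid M] {m : ℕ} (S : Finset ℤ)
    (F : (Fin m → ℤ) → M) :
    ∑ p ∈ ((Fintype.piFinset fun _ : Fin m => S).filter
        (fun d => ∀ i j : Fin m, i < j → d j < d i)) ×ˢ (univ : Finset (Equiv.Perm (Fin m))),
        F (p.1 ∘ ⇑p.2)
    = ∑ γ ∈ (Fintype.piFinset fun _ : Fin m => S).filter (fun γ => Function.Injective γ),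
        F γ := by
  refine Finset.sum_nbij' (fun p => p.1 ∘ ⇑p.2)
    (fun γ => (γ ∘ ⇑(Fin.revPerm.trans (Tuple.sort γ)), (Fin.revPerm.trans (Tuple.sort γ))⁻¹))
    ?_ ?_ ?_ ?_ ?_
  · rintro ⟨d, τ⟩ hp
    simp only [Finset.mem_product, Finset.mem_filter, Fintype.mem_piFinset] at hp
    obtain ⟨⟨hdS, hdanti⟩, -⟩ := hp
    simp only [Finset.mem_filter, Fintype.mem_piFinset]
    constructor
    · intro i; exact hdS (τ i)
    · have hdinj : Function.Injective d := by
        intro u v huv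
        rcases lt_trichotomy u v with h | h | h
        · exact absurd (hdanti u v h) (by omega)
        · exact h
        · exact absurd (hdanti v u h) (by omega)
      exact hdinj.comp τ.injective
  · intro γ hγ
    simp only [Finset.mem_filter, Fintype.mem_piFinset] at hγ
    obtain ⟨hγS, hγinj⟩ := hγ
    simp only [Finset.mem_product, Finset.mem_filter, Fintype.mem_piFinset, Finset.mem_univ,
      and_true]
    exact ⟨fun i => hγS _, sorted_anti γ hγinj⟩
  · rintro ⟨d, τ⟩ hp
    simp only [Finset.mem_product, Finset.mem_filter, Fintype.mem_piFinset] at hp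
    obtain ⟨⟨hdS, hdanti⟩, -⟩ := hp
    have hdinj : Function.Injective d := by
      intro u v huv
      rcases lt_trichotomy u v with h | h | h
      · exact absurd (hdanti u v h) (by omega)
      · exact h
      · exact absurd (hdanti v u h) (by omega)
    have hγinj : Function.Injective (d ∘ ⇑τ) := hdinj.comp τ.injective
    have hanti2 := sorted_anti (d ∘ ⇑τ) hγinj
    -- (d∘τ) ∘ (π) = d'  with d' strict anti; uniqueness vs d ∘ (1)?
    set π := Fin.revPerm.trans (Tuple.sort (d ∘ ⇑τ)) with hπ
    have hcomp : ((d ∘ ⇑τ) ∘ ⇑π) ∘ ⇑π⁻¹ = d ∘ ⇑τ := by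
      funext x; simp
    have huniq := anti_comp_unique hanti2 hdanti (π⁻¹) τ hcomp
    rw [Prod.ext_iff]
    exact ⟨huniq.1, huniq.2⟩
  · intro γ hγ
    funext x
    show γ ((Fin.revPerm.trans (Tuple.sort γ)) ((Fin.revPerm.trans (Tuple.sort γ))⁻¹ x)) = γ x
    rw [Equiv.Perm.inv_def, Equiv.apply_symm_apply]
  · intro p hp
    rfl

noncomputable def Nmat {m : ℕ} (Q : PowerSeries R) (d : Fin m → ℤ) :
    Matrix (Fin m) (Fin m) R := Matrix.of fun i j : Fin m => qInt Q (d i + (j : ℕ))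

def Emat {m k : ℕ} (y : Fin k → R) (lam : Fin m → ℕ) (d : Fin m → ℤ) :
    Matrix (Fin m) (Fin m) R := Matrix.of fun i j : Fin m => eInt y ((lam i : ℤ) - (i : ℕ) - d j)

lemma detN_expand {m : ℕ} (Q : PowerSeries R) (d : Fin m → ℤ) :
    ∑ σ : Equiv.Perm (Fin m), ((Equiv.Perm.sign σ : ℤ) : R) *
      ∏ i : Fin m, qInt Q (d i + ((σ i : ℕ) : ℤ)) = (Nmat Q d).det := by
  rw [← Matrix.det_transpose, Matrix.det_apply']
  refine Finset.sum_congr rfl fun σ _ => ?_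
  congr 1

lemma detE_expand {m k : ℕ} (y : Fin k → R) (lam : Fin m → ℕ) (d : Fin m → ℤ) :
    ∑ τ : Equiv.Perm (Fin m), ((Equiv.Perm.sign τ : ℤ) : R) *
      ∏ i : Fin m, eInt y ((lam i : ℤ) - (i : ℕ) - d (τ i)) = (Emat y lam d).det := by
  rw [← Matrix.det_transpose, Matrix.det_apply']
  refine Finset.sum_congr rfl fun τ _ => ?_
  congr 1

lemma detN_zero {m : ℕ} (Q : PowerSeries R) {d : Fin m → ℤ}
    (hd : ∀ i j : Fin m, i < j → d j < d i) {i0 : Fin m} (h : d i0 + (i0 : ℤ) < 0) :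
    (Nmat Q d).det = 0 := by
  have hm : 0 < m := Fin.pos i0
  set last : Fin m := ⟨m - 1, by omega⟩ with hlast
  have hle : i0 ≤ last := by rw [Fin.le_def]; simp [hlast]; omega
  have h2 : d last + (last : ℤ) < 0 := lt_of_le_of_lt (add_le_of_strictAnti d hd hle) h
  apply Matrix.det_eq_zero_of_row_eq_zero last
  intro j
  show qInt Q (d last + (j : ℕ)) = 0
  apply qInt_neg
  have : (j : ℕ) ≤ m - 1 := by omega
  have : ((j : ℕ) : ℤ) ≤ ((last : ℕ) : ℤ) := by simp [hlast]; omega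
  omega

lemma detE_zero {m k : ℕ} (y : Fin k → R) (lam : Fin m → ℕ)
    (hanti : ∀ i j : Fin m, i ≤ j → lam j ≤ lam i) {d : Fin m → ℤ}
    (hd : ∀ i j : Fin m, i < j → d j < d i) {m0 : Fin m} (h : (lam m0 : ℤ) < d m0 + (m0 : ℤ)) :
    (Emat y lam d).det = 0 := by
  rw [Matrix.det_apply']
  refine Finset.sum_eq_zero fun τ _ => ?_
  -- find x ≤ m0 with m0 ≤ τ x
  have hex : ∃ x : Fin m, x ≤ m0 ∧ m0 ≤ τ x := by
    by_contra hc
    push_neg at hc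
    have himg : (Finset.Iic m0).image ⇑τ ⊆ Finset.Iio m0 := by
      intro b hb
      simp only [Finset.mem_image, Finset.mem_Iic] at hb
      obtain ⟨x, hx, rfl⟩ := hb
      exact Finset.mem_Iio.mpr (hc x hx)
    have hcard := Finset.card_le_card himg
    rw [Finset.card_image_of_injective _ τ.injective, Fin.card_Iic, Fin.card_Iio] at hcard
    omega
  obtain ⟨x, hx1, hx2⟩ := hex
  have hentry : Emat y lam d (τ x) x = 0 := by
    show eInt y ((lam (τ x) : ℤ) - ((τ x : ℕ) : ℤ) - d x) = 0
    apply eInt_neg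
    have h1 : (lam (τ x) : ℤ) ≤ (lam m0 : ℤ) := by exact_mod_cast hanti m0 (τ x) hx2
    have h2 : d m0 + (m0 : ℤ) ≤ d x + (x : ℤ) := add_le_of_strictAnti d hd hx1
    have h3 : ((x : ℕ) : ℤ) ≤ ((τ x : ℕ) : ℤ) := by exact_mod_cast le_trans hx1 hx2
    omega
  exact mul_eq_zero_of_right _ (Finset.prod_eq_zero (Finset.mem_univ x) hentry)

theorem partB {k m : ℕ} (y : Fin k → R) (Q : PowerSeries R) (lam : Fin m → ℕ)
    (hanti : ∀ i j : Fin m, i ≤ j → lam j ≤ lam i) :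
    ∑ σ : Equiv.Perm (Fin m), ((Equiv.Perm.sign σ : ℤ) : R) *
        ∏ i : Fin m, thInt Q y ((lam i : ℤ) + ((σ i : ℕ) : ℤ) - ((i : ℕ) : ℤ))
    = ∑ μ ∈ (Finset.Icc (0 : Fin m → ℕ) lam).filter
          (fun μ => ∀ i j : Fin m, i ≤ j → μ j ≤ μ i),
          Matrix.det (Matrix.of fun i j : Fin m =>
              qInt Q ((μ i : ℤ) + (j : ℕ) - (i : ℕ))) *
            Matrix.det (Matrix.of fun i j : Fin m =>
              eInt y ((lam i : ℤ) - (μ j : ℤ) + (j : ℕ) - (i : ℕ))) := by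
  classical
  set S : Finset ℤ := Finset.Icc (-(m : ℤ)) ((univ.sup lam : ℕ) : ℤ) with hSdef
  have step1 : ∀ (σ : Equiv.Perm (Fin m)) (i : Fin m),
      thInt Q y ((lam i : ℤ) + ((σ i : ℕ) : ℤ) - ((i : ℕ) : ℤ))
      = ∑ c ∈ S, eInt y (((lam i : ℤ) - ((i : ℕ) : ℤ)) - c) * qInt Q (c + ((σ i : ℕ) : ℤ)) := by
    intro σ i
    rw [show (lam i : ℤ) + ((σ i : ℕ) : ℤ) - ((i : ℕ) : ℤ)
        = ((lam i : ℤ) - ((i : ℕ) : ℤ)) + ((σ i : ℕ) : ℤ) from by ring]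
    apply thInt_eq_sum
    intro c hc1 hc2
    rw [hSdef, Finset.mem_Icc]
    have hb : ((σ i : ℕ) : ℤ) ≤ (m : ℤ) := by exact_mod_cast le_of_lt (σ i).2
    have h1 : lam i ≤ univ.sup lam := Finset.le_sup (Finset.mem_univ i)
    have h2 : ((lam i : ℕ) : ℤ) ≤ ((univ.sup lam : ℕ) : ℤ) := by exact_mod_cast h1
    have h3 : (0 : ℤ) ≤ ((i : ℕ) : ℤ) := by positivity
    constructor <;> omega
  calc ∑ σ : Equiv.Perm (Fin m), ((Equiv.Perm.sign σ : ℤ) : R) *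
        ∏ i : Fin m, thInt Q y ((lam i : ℤ) + ((σ i : ℕ) : ℤ) - ((i : ℕ) : ℤ))
      = ∑ σ : Equiv.Perm (Fin m), ∑ γ ∈ Fintype.piFinset (fun _ : Fin m => S),
          ((Equiv.Perm.sign σ : ℤ) : R) *
          ((∏ i : Fin m, eInt y ((lam i : ℤ) - ((i : ℕ) : ℤ) - γ i)) *
            ∏ i : Fin m, qInt Q (γ i + ((σ i : ℕ) : ℤ))) := by
        refine Finset.sum_congr rfl fun σ _ => ?_
        rw [show (∏ i : Fin m, thInt Q y ((lam i : ℤ) + ((σ i : ℕ) : ℤ) - ((i : ℕ) : ℤ)))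
            = ∏ i : Fin m, ∑ c ∈ S, eInt y (((lam i : ℤ) - ((i : ℕ) : ℤ)) - c) *
                qInt Q (c + ((σ i : ℕ) : ℤ)) from
          Finset.prod_congr rfl fun i _ => step1 σ i]
        rw [Finset.prod_univ_sum, Finset.mul_sum]
        refine Finset.sum_congr rfl fun γ _ => ?_
        rw [Finset.prod_mul_distrib]
    _ = ∑ γ ∈ Fintype.piFinset (fun _ : Fin m => S),
          (∏ i : Fin m, eInt y ((lam i : ℤ) - ((i : ℕ) : ℤ) - γ i)) * (Nmat Q γ).det := by
        rw [Finset.sum_comm]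
        refine Finset.sum_congr rfl fun γ _ => ?_
        rw [← detN_expand, Finset.mul_sum]
        exact Finset.sum_congr rfl fun σ _ => by ring
    _ = ∑ γ ∈ (Fintype.piFinset fun _ : Fin m => S).filter (fun γ => Function.Injective γ),
          (∏ i : Fin m, eInt y ((lam i : ℤ) - ((i : ℕ) : ℤ) - γ i)) * (Nmat Q γ).det := by
        refine (Finset.sum_filter_of_ne fun γ _ hne => ?_).symm
        by_contra hninj
        apply hne
        rw [Function.not_injective_iff] at hninj
        obtain ⟨u, v, huv, hne'⟩ := hninj
        have : (Nmat Q γ).det = 0 := by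
          apply Matrix.det_zero_of_row_eq hne'
          funext j
          show qInt Q (γ u + (j : ℕ)) = qInt Q (γ v + (j : ℕ))
          rw [huv]
        rw [this, mul_zero]
    _ = ∑ p ∈ ((Fintype.piFinset fun _ : Fin m => S).filter
          (fun d => ∀ i j : Fin m, i < j → d j < d i)) ×ˢ (univ : Finset (Equiv.Perm (Fin m))),
          (∏ i : Fin m, eInt y ((lam i : ℤ) - ((i : ℕ) : ℤ) - (p.1 ∘ ⇑p.2) i)) *
            (Nmat Q (p.1 ∘ ⇑p.2)).det :=
        (sum_inj_group S fun γ =>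
          (∏ i : Fin m, eInt y ((lam i : ℤ) - ((i : ℕ) : ℤ) - γ i)) * (Nmat Q γ).det).symm
    _ = ∑ d ∈ (Fintype.piFinset fun _ : Fin m => S).filter
          (fun d => ∀ i j : Fin m, i < j → d j < d i),
          (Emat y lam d).det * (Nmat Q d).det := by
        rw [Finset.sum_product]
        refine Finset.sum_congr rfl fun d _ => ?_
        have hsub : ∀ τ : Equiv.Perm (Fin m), Nmat Q (d ∘ ⇑τ) = (Nmat Q d).submatrix ⇑τ id := by
          intro τ; rfl
        calc ∑ τ : Equiv.Perm (Fin m),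
              (∏ i : Fin m, eInt y ((lam i : ℤ) - ((i : ℕ) : ℤ) - (d ∘ ⇑τ) i)) *
                (Nmat Q (d ∘ ⇑τ)).det
            = ∑ τ : Equiv.Perm (Fin m), ((Equiv.Perm.sign τ : ℤ) : R) *
                (∏ i : Fin m, eInt y ((lam i : ℤ) - ((i : ℕ) : ℤ) - d (τ i))) *
                (Nmat Q d).det := by
              refine Finset.sum_congr rfl fun τ _ => ?_
              rw [hsub τ, Matrix.det_permute]
              simp only [Function.comp_apply]
              ring
          _ = (Emat y lam d).det * (Nmat Q d).det := by
              rw [← Finset.sum_mul, detE_expand]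
    _ = ∑ d ∈ ((Fintype.piFinset fun _ : Fin m => S).filter
          (fun d => ∀ i j : Fin m, i < j → d j < d i)).filter
          (fun d => ∀ i : Fin m, 0 ≤ d i + (i : ℤ) ∧ d i + (i : ℤ) ≤ (lam i : ℤ)),
          (Emat y lam d).det * (Nmat Q d).det := by
        refine (Finset.sum_filter_of_ne fun d hd hne => ?_).symm
        rw [Finset.mem_filter] at hd
        by_contra hgood
        push_neg at hgood
        obtain ⟨i0, hi0⟩ := hgood
        apply hne
        by_cases hcase : 0 ≤ d i0 + (i0 : ℤ)
        · rw [detE_zero y lam hanti hd.2 (by omega : (lam i0 : ℤ) < d i0 + (i0 : ℤ)), zero_mul]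
        · rw [detN_zero Q hd.2 (by omega : d i0 + (i0 : ℤ) < 0), mul_zero]
    _ = ∑ μ ∈ (Finset.Icc (0 : Fin m → ℕ) lam).filter
          (fun μ => ∀ i j : Fin m, i ≤ j → μ j ≤ μ i),
          Matrix.det (Matrix.of fun i j : Fin m =>
              qInt Q ((μ i : ℤ) + (j : ℕ) - (i : ℕ))) *
            Matrix.det (Matrix.of fun i j : Fin m =>
              eInt y ((lam i : ℤ) - (μ j : ℤ) + (j : ℕ) - (i : ℕ))) := by
        refine Finset.sum_nbij' (fun d => fun t : Fin m => (d t + (t : ℤ)).toNat)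
          (fun μ => fun t : Fin m => (μ t : ℤ) - (t : ℤ)) ?_ ?_ ?_ ?_ ?_
        · intro d hd
          simp only [Finset.mem_filter, Fintype.mem_piFinset] at hd
          obtain ⟨⟨hdS, hdanti⟩, hgood⟩ := hd
          simp only [Finset.mem_filter, Finset.mem_Icc]
          refine ⟨⟨fun t => Nat.zero_le _, fun t => ?_⟩, fun i j hij => ?_⟩
          · beta_reduce
            have := (hgood t).2
            omega
          · beta_reduce
            have h1 := add_le_of_strictAnti d hdanti hij
            have h2 := (hgood i).1
            have h3 := (hgood j).1
            omega
        · intro μ hμ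
          simp only [Finset.mem_filter, Finset.mem_Icc] at hμ
          obtain ⟨⟨hμ0, hμlam⟩, hμanti⟩ := hμ
          simp only [Finset.mem_filter, Fintype.mem_piFinset]
          refine ⟨⟨fun t => ?_, fun i j hij => ?_⟩, fun t => ?_⟩
          · beta_reduce
            rw [hSdef, Finset.mem_Icc]
            have h1 : μ t ≤ lam t := hμlam t
            have h2 : lam t ≤ univ.sup lam := Finset.le_sup (Finset.mem_univ t)
            have h3 : (t : ℕ) < m := t.2
            constructor <;> [omega; (push_cast; omega)]
          · beta_reduce
            have h1 : μ j ≤ μ i := hμanti i j (le_of_lt hij)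
            have h2 : (i : ℕ) < (j : ℕ) := hij
            have h3 : ((μ j : ℕ) : ℤ) ≤ ((μ i : ℕ) : ℤ) := by exact_mod_cast h1
            omega
          · beta_reduce
            have h1 : μ t ≤ lam t := hμlam t
            have h2 : ((μ t : ℕ) : ℤ) ≤ ((lam t : ℕ) : ℤ) := by exact_mod_cast h1
            constructor <;> omega
        · intro d hd
          simp only [Finset.mem_filter] at hd
          funext t
          beta_reduce
          have := (hd.2 t).1
          omega
        · intro μ hμ
          funext t
          beta_reduce
          omega
        · intro d hd
          simp only [Finset.mem_filter] at hd
          rw [mul_comm]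
          congr 1
          · apply congrArg Matrix.det
            funext i j
            show qInt Q (d i + (j : ℕ)) = qInt Q ((((d i + (i : ℤ)).toNat : ℕ) : ℤ) + (j : ℕ) - (i : ℕ))
            congr 1
            have := (hd.2 i).1
            omega
          · apply congrArg Matrix.det
            funext i j
            show eInt y ((lam i : ℤ) - ((i : ℕ) : ℤ) - d j)
              = eInt y ((lam i : ℤ) - (((d j + (j : ℤ)).toNat : ℕ) : ℤ) + (j : ℕ) - (i : ℕ))
            congr 1
            have := (hd.2 j).1
            omega

end Stmt16

/-- if the `k`-strict partition `λ` satisfies `λ_i + λ_j ≤ 2k + j − i` for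
all `i < j` (so that `C(λ) = ∅` and `Θ_λ = ∏_{i<j}(1−R_{ij}) ϑ_λ`, expanded here as the
signed sum over subsets `T` of the pairs), then
`Θ_λ(x;y) = ∑_{μ⊆λ} S_μ(x) s_{λ'/μ'}(y)` with `S_μ(x) = det(q_{μ_i+j−i}(x))` and
`s_{λ'/μ'}(y) = det(e_{λ_i−μ_j+j−i}(y))`. -/

theorem stmt_16 {R : Type*} [CommRing R] (n k ℓ : ℕ) (x : Fin n → R) (y : Fin k → R)
    (Q : PowerSeries R)
    (hQ : Q * ∏ i : Fin n, (1 - PowerSeries.C (x i) * PowerSeries.X) =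
          ∏ i : Fin n, (1 + PowerSeries.C (x i) * PowerSeries.X))
    (lam : Fin ℓ → ℕ)
    (hanti : ∀ i j : Fin ℓ, i ≤ j → lam j ≤ lam i)
    (hkstrict : ∀ i j : Fin ℓ, i < j → k < lam j → lam j < lam i)
    (hC : ∀ i j : Fin ℓ, i < j → lam i + lam j + (i : ℕ) ≤ 2 * k + (j : ℕ)) :
    ∑ T ∈ (Finset.univ : Finset (PairIdx ℓ)).powerset,
      (-1 : R) ^ T.card *
        ∏ i : Fin ℓ,
          thInt Q y ((lam i : ℤ) + ((T.filter fun p => p.1.1 = i).card : ℤ)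
            - ((T.filter fun p => p.1.2 = i).card : ℤ))
      = ∑ μ ∈ (Finset.Icc (0 : Fin ℓ → ℕ) lam).filter
          (fun μ => ∀ i j : Fin ℓ, i ≤ j → μ j ≤ μ i),
          Matrix.det (Matrix.of fun i j : Fin ℓ =>
              qInt Q ((μ i : ℤ) + (j : ℕ) - (i : ℕ))) *
            Matrix.det (Matrix.of fun i j : Fin ℓ =>
              eInt y ((lam i : ℤ) - (μ j : ℤ) + (j : ℕ) - (i : ℕ))) :=
  (Stmt16.partA (thInt Q y) lam).trans (Stmt16.partB y Q lam hanti)
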